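/- Let x* be an equilibrium of the Lotka-Volterra system dx/dt = X(1 + Bx) with extinct set 𝒥, i.e., x*ⱼ = 0 for j ∈ 𝒥 and (1 + Bx*)ⱼ = 0 for j ∉ 𝒥. Then the determinant of the Jacobian Df at x* factorizes as det(Df|_{x*}) = ∏_{i∈𝒥} (1 + Σ_ℓ B_{iℓ} x*_ℓ) · ∏_{i∉𝒥} x*_i · det(B⁺), where B⁺ is the principal submatrix of B on the complement of 𝒥. -/

import Mathlib

open Matrix BigOperators

/-- At an equilibrium `x*` with extinct set `𝒥`, the determinant of the Jacobian
`Df|_{x*} = diag(1 + Bx*) + diag(x*)·B` factorizes as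
`∏_{i∈𝒥}(1 + Σ_ℓ B_{iℓ}x*_ℓ) · ∏_{i∉𝒥} x*_i · det(B⁺)`. -/
theorem stmt11 (s : ℕ) (B : Matrix (Fin s) (Fin s) ℝ) (𝒥 : Finset (Fin s))
    (xs : Fin s → ℝ)
    (hzero : ∀ j ∈ 𝒥, xs j = 0)
    (heq : ∀ j ∉ 𝒥, 1 + B.mulVec xs j = 0) :
    (Matrix.diagonal (fun i => 1 + B.mulVec xs i) + Matrix.diagonal xs * B).det =
      (∏ i ∈ 𝒥, (1 + ∑ l, B i l * xs l)) * (∏ i ∈ 𝒥ᶜ, xs i) *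
        (B.submatrix (Subtype.val : {i : Fin s // i ∉ 𝒥} → Fin s) Subtype.val).det := by
  classical
  set M := Matrix.diagonal (fun i => 1 + B.mulVec xs i) + Matrix.diagonal xs * B with hM
  let e : {i : Fin s // i ∈ 𝒥} ⊕ {i : Fin s // i ∉ 𝒥} ≃ Fin s := Equiv.sumCompl (· ∈ 𝒥)
  have hdet : M.det = (M.submatrix e e).det := (Matrix.det_submatrix_equiv_self e M).symm
  have hblock : M.submatrix e e =
      Matrix.fromBlocks
        (Matrix.diagonal (fun i : {i : Fin s // i ∈ 𝒥} => 1 + B.mulVec xs i.1))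
        0
        (Matrix.of fun (i : {i : Fin s // i ∉ 𝒥}) (j : {i : Fin s // i ∈ 𝒥}) =>
          xs i.1 * B i.1 j.1)
        (Matrix.diagonal (fun i : {i : Fin s // i ∉ 𝒥} => xs i.1) *
          B.submatrix Subtype.val Subtype.val) := by
    ext i j
    have hentry : ∀ a b : Fin s, M a b = (if a = b then 1 + B.mulVec xs a else 0) + xs a * B a b := by
      intro a b
      simp [M, Matrix.add_apply, Matrix.diagonal_apply, Matrix.diagonal_mul]
    cases i with
    | inl i =>
      cases j with
      | inl j =>
        simp [e, hentry, hzero i.1 i.2, Matrix.diagonal_apply]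
      | inr j =>
        have hne : (i.1 : Fin s) ≠ j.1 := fun h => j.2 (h ▸ i.2)
        simp [e, hentry, hzero i.1 i.2, hne]
    | inr i =>
      cases j with
      | inl j =>
        have hne : (i.1 : Fin s) ≠ j.1 := fun h => i.2 (h ▸ j.2)
        simp [e, hentry, hne]
      | inr j =>
        by_cases h : i = j
        · subst h
          simp [e, hentry, heq i.1 i.2, Matrix.diagonal_apply, Matrix.mul_apply,
            Matrix.diagonal_mul]
        · have hne : (i.1 : Fin s) ≠ j.1 := fun hh => h (Subtype.ext hh)
          simp [e, hentry, hne, Matrix.diagonal_apply, Matrix.diagonal_mul, h]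
  rw [hdet, hblock, Matrix.det_fromBlocks_zero₁₂, Matrix.det_diagonal, Matrix.det_mul,
    Matrix.det_diagonal]
  have h1 : (∏ i : {i : Fin s // i ∈ 𝒥}, (1 + B.mulVec xs i.1)) =
      ∏ i ∈ 𝒥, (1 + ∑ l, B i l * xs l) := by
    rw [← Finset.prod_coe_sort 𝒥 (fun i => 1 + ∑ l, B i l * xs l)]
    refine Finset.prod_congr rfl fun i _ => ?_
    simp [Matrix.mulVec, dotProduct]
  have h2 : (∏ i : {i : Fin s // i ∉ 𝒥}, xs i.1) = ∏ i ∈ 𝒥ᶜ, xs i := by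
    rw [Finset.prod_subtype 𝒥ᶜ (fun x => Finset.mem_compl) xs]
  rw [h1, h2]
  ring
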